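/- arXiv:1211.4965 — 2 statements merged into one kernel-verified Lean document; each statement's English description precedes it below -/
import Mathlib

section
/- Let H be a densely defined self-adjoint operator on a complex Hilbert space 𝒳, let B be a CAR representation of a complex Hilbert space 𝒦 on 𝒳, and let E₀, λ, ε be real numbers with ε > 0. Suppose: (i) Ξ ∈ D(H) is a unit vector with ‖(H − E₀)Ξ‖ ≤ ε; (ii) h ∈ 𝒦 with ‖h‖ = 1, and k ∈ 𝒦; (iii) R : D(H) → 𝒳 is a map such that for all Φ, Ψ ∈ D(H): ⟨HΦ, (B(h) + B(h)*)Ψ⟩ − ⟨(B(h) + B(h)*)Φ, HΨ⟩ = ⟨Φ, (B(k)* − B(k))Ψ + RΨ⟩. Then Ψ₀ := (B(h) + B(h)*)Ξ is a unit vector belonging to D(H), and ‖HΨ₀ − (E₀ + λ)Ψ₀‖ ≤ 2ε + 2‖k − λh‖ + 2|λ|·‖B(h)Ξ‖ + ‖RΞ‖. -/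
open ContinuousLinearMap in
/-- A CAR representation of a complex Hilbert space `𝒦` on a complex Hilbert space `𝒳`:
a map `B` assigning to each `f ∈ 𝒦` a bounded operator on `𝒳`, conjugate-linear in `f`,
satisfying `B(f)B(g)* + B(g)*B(f) = ⟨f,g⟩·I` and `B(f)B(g) + B(g)B(f) = 0`. -/
structure CARRep (𝒦 𝒳 : Type*) [NormedAddCommGroup 𝒦] [InnerProductSpace ℂ 𝒦]
    [NormedAddCommGroup 𝒳] [InnerProductSpace ℂ 𝒳] [CompleteSpace 𝒳] where
  B : 𝒦 → (𝒳 →L[ℂ] 𝒳)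
  map_add : ∀ f g, B (f + g) = B f + B g
  map_smul : ∀ (c : ℂ) (f), B (c • f) = (starRingEnd ℂ c) • B f
  car_mixed : ∀ f g,
    B f * adjoint (B g) + adjoint (B g) * B f = (inner ℂ f g : ℂ) • (1 : 𝒳 →L[ℂ] 𝒳)
  car_ann : ∀ f g, B f * B g + B g * B f = 0

set_option maxHeartbeats 1000000 in
open ContinuousLinearMap in
/-- **key quantitative estimate.** Let `H` be a densely defined self-adjoint
operator on `𝒳`, `B` a CAR representation of `𝒦` on `𝒳`, `ε > 0`, `Ξ ∈ D(H)` a unit vector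
with `‖(H − E₀)Ξ‖ ≤ ε`, `h ∈ 𝒦` a unit vector, `k ∈ 𝒦`, and `R : D(H) → 𝒳` a map such that
`⟨HΦ, (B(h)+B(h)*)Ψ⟩ − ⟨(B(h)+B(h)*)Φ, HΨ⟩ = ⟨Φ, (B(k)* − B(k))Ψ + RΨ⟩` for all
`Φ, Ψ ∈ D(H)`. Then `Ψ₀ := (B(h)+B(h)*)Ξ` is a unit vector in `D(H)` and
`‖HΨ₀ − (E₀+λ)Ψ₀‖ ≤ 2ε + 2‖k − λh‖ + 2|λ|‖B(h)Ξ‖ + ‖RΞ‖`. -/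
theorem weyl_vector_estimate {𝒦 𝒳 : Type*}
    [NormedAddCommGroup 𝒦] [InnerProductSpace ℂ 𝒦]
    [NormedAddCommGroup 𝒳] [InnerProductSpace ℂ 𝒳] [CompleteSpace 𝒳]
    (H : 𝒳 →ₗ.[ℂ] 𝒳) (hdense : Dense (H.domain : Set 𝒳)) (hsa : IsSelfAdjoint H)
    (rep : CARRep 𝒦 𝒳) (E₀ lam ε : ℝ) (hε : 0 < ε)
    (Ξ : H.domain) (hΞnorm : ‖(Ξ : 𝒳)‖ = 1)
    (hΞ : ‖H Ξ - (E₀ : ℂ) • (Ξ : 𝒳)‖ ≤ ε)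
    (h k : 𝒦) (hh : ‖h‖ = 1)
    (R : H.domain → 𝒳)
    (hR : ∀ Φ Ψ : H.domain,
      (inner ℂ (H Φ) ((rep.B h + adjoint (rep.B h)) (Ψ : 𝒳)) : ℂ)
          - (inner ℂ ((rep.B h + adjoint (rep.B h)) (Φ : 𝒳)) (H Ψ) : ℂ)
        = (inner ℂ (Φ : 𝒳) ((adjoint (rep.B k) - rep.B k) (Ψ : 𝒳) + R Ψ) : ℂ)) :
    ‖(rep.B h + adjoint (rep.B h)) (Ξ : 𝒳)‖ = 1 ∧
      ∃ hmem : (rep.B h + adjoint (rep.B h)) (Ξ : 𝒳) ∈ H.domain,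
        ‖H ⟨(rep.B h + adjoint (rep.B h)) (Ξ : 𝒳), hmem⟩
            - ((E₀ + lam : ℝ) : ℂ) • ((rep.B h + adjoint (rep.B h)) (Ξ : 𝒳))‖
          ≤ 2 * ε + 2 * ‖k - (lam : ℂ) • h‖ + 2 * |lam| * ‖rep.B h (Ξ : 𝒳)‖ + ‖R Ξ‖ := by
  classical
  set C : 𝒳 →L[ℂ] 𝒳 := rep.B h + adjoint (rep.B h) with hCdef
  -- C is self-adjoint
  have hCadj : adjoint C = C := by
    rw [hCdef, map_add, adjoint_adjoint, add_comm]
  have hCinner : ∀ x y : 𝒳, (inner ℂ (C x) y : ℂ) = inner ℂ x (C y) := by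
    intro x y
    conv_lhs => rw [← hCadj]
    exact adjoint_inner_left _ _ _
  have hBB : rep.B h * rep.B h = 0 := by
    have h2 : (2 : ℂ) • (rep.B h * rep.B h) = 0 := by
      rw [two_smul]; exact rep.car_ann h h
    exact (smul_eq_zero.mp h2).resolve_left two_ne_zero
  have hDD : adjoint (rep.B h) * adjoint (rep.B h) = 0 := by
    have h0 := congrArg star hBB
    simpa [star_mul, star_eq_adjoint] using h0
  have hmix : rep.B h * adjoint (rep.B h) + adjoint (rep.B h) * rep.B h = 1 := by
    rw [rep.car_mixed h h, inner_self_eq_norm_sq_to_K, hh]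
    norm_num
  have hCC : C * C = 1 := by
    have hx : C * C = rep.B h * rep.B h
        + (rep.B h * adjoint (rep.B h) + adjoint (rep.B h) * rep.B h)
        + adjoint (rep.B h) * adjoint (rep.B h) := by
      rw [hCdef]; noncomm_ring
    rw [hx, hBB, hDD, hmix]
    simp
  have hCC' : ∀ x : 𝒳, C (C x) = x := by
    intro x
    have h0 := congrArg (fun A : 𝒳 →L[ℂ] 𝒳 => A x) hCC
    simpa using h0
  have hiso : ∀ x : 𝒳, ‖C x‖ = ‖x‖ := by
    intro x
    have h1 : (inner ℂ (C x) (C x) : ℂ) = inner ℂ x x := by rw [hCinner, hCC']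
    rw [inner_self_eq_norm_sq_to_K, inner_self_eq_norm_sq_to_K] at h1
    have h2 : ‖C x‖ ^ 2 = ‖x‖ ^ 2 := by exact_mod_cast h1
    rw [← Real.sqrt_sq (norm_nonneg (C x)), ← Real.sqrt_sq (norm_nonneg x), h2]
  -- norm bound for B g and its adjoint
  have hBnorm : ∀ (g : 𝒦) (x : 𝒳),
      ‖rep.B g x‖ ^ 2 + ‖adjoint (rep.B g) x‖ ^ 2 = ‖g‖ ^ 2 * ‖x‖ ^ 2 := by
    intro g x
    have h1 : (inner ℂ x ((rep.B g * adjoint (rep.B g) + adjoint (rep.B g) * rep.B g) x) : ℂ)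
        = (‖g‖ : ℂ) ^ 2 * (‖x‖ : ℂ) ^ 2 := by
      rw [rep.car_mixed g g, inner_self_eq_norm_sq_to_K]
      simp [inner_smul_right, inner_self_eq_norm_sq_to_K]
    have h2 : (inner ℂ x ((rep.B g) (adjoint (rep.B g) x)) : ℂ)
        = inner ℂ (adjoint (rep.B g) x) (adjoint (rep.B g) x) :=
      (adjoint_inner_left (rep.B g) (adjoint (rep.B g) x) x).symm
    have h3 : (inner ℂ x ((adjoint (rep.B g)) (rep.B g x)) : ℂ)
        = inner ℂ (rep.B g x) (rep.B g x) :=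
      adjoint_inner_right (rep.B g) x (rep.B g x)
    rw [ContinuousLinearMap.add_apply, ContinuousLinearMap.mul_apply,
      ContinuousLinearMap.mul_apply, inner_add_right, h2, h3,
      inner_self_eq_norm_sq_to_K, inner_self_eq_norm_sq_to_K] at h1
    exact_mod_cast add_comm ((‖rep.B g x‖ : ℂ) ^ 2) ((‖adjoint (rep.B g) x‖ : ℂ) ^ 2) ▸ h1
  -- self-adjointness facts
  have hsaEq : H.adjoint = H := hsa
  have deq : H.adjoint.domain = H.domain := congrArg LinearPMap.domain hsaEq
  have feq := (LinearPMap.ext_iff.mp hsaEq).2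
  have hsym : ∀ Φ Ψ : H.domain, (inner ℂ (H Φ) (Ψ : 𝒳) : ℂ) = inner ℂ (Φ : 𝒳) (H Ψ) := by
    intro Φ Ψ
    have hfa := LinearPMap.adjoint_isFormalAdjoint hdense (T := H)
    set Φ' : H.adjoint.domain := ⟨(Φ : 𝒳), by rw [deq]; exact Φ.2⟩ with hΦ'
    have h1 := hfa Φ' Ψ
    have h2 : H.adjoint Φ' = H Φ := feq (x := (Φ : 𝒳)) (hf := Φ'.2) (hg := Φ.2)
    rw [h2] at h1
    exact h1
  set w : 𝒳 := C (H Ξ) + ((adjoint (rep.B k) - rep.B k) (Ξ : 𝒳) + R Ξ) with hw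
  have hkey : ∀ Φ : H.domain, (inner ℂ (H Φ) (C (Ξ : 𝒳)) : ℂ) = inner ℂ (Φ : 𝒳) w := by
    intro Φ
    have h1 := hR Φ Ξ
    have h2 : (inner ℂ (C (Φ : 𝒳)) (H Ξ) : ℂ) = inner ℂ (Φ : 𝒳) (C (H Ξ)) := hCinner _ _
    rw [hw, inner_add_right, ← h2]
    linear_combination h1
  have hmem' : C (Ξ : 𝒳) ∈ H.adjoint.domain := by
    apply LinearPMap.mem_adjoint_domain_of_exists
    refine ⟨w, fun Φ => ?_⟩
    have h0 := congrArg (starRingEnd ℂ) (hkey Φ)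
    simpa [inner_conj_symm] using h0.symm
  have hmem : C (Ξ : 𝒳) ∈ H.domain := by rwa [deq] at hmem'
  have hHval : H ⟨C (Ξ : 𝒳), hmem⟩ = w := by
    apply (hdense.eq_of_inner_right ℂ (fun v hv => ?_)).symm
    obtain ⟨Φ, rfl⟩ : ∃ Φ : H.domain, (Φ : 𝒳) = v := ⟨⟨v, hv⟩, rfl⟩
    rw [← hsym Φ ⟨C (Ξ : 𝒳), hmem⟩]
    exact (hkey Φ).symm
  -- the perturbed field operator
  set g : 𝒦 := k - (lam : ℂ) • h with hg
  have hBg : rep.B g = rep.B k - (lam : ℂ) • rep.B h := by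
    have e1 : g = k + (-(lam : ℂ)) • h := by rw [hg, neg_smul, ← sub_eq_add_neg]
    rw [e1, rep.map_add, rep.map_smul]
    simp [Complex.conj_ofReal, neg_smul, sub_eq_add_neg]
  have hAg : adjoint (rep.B g) = adjoint (rep.B k) - (lam : ℂ) • adjoint (rep.B h) := by
    rw [hBg, ← star_eq_adjoint, star_sub, star_smul, Complex.star_def, Complex.conj_ofReal,
      star_eq_adjoint, star_eq_adjoint]
  have hvec : H ⟨C (Ξ : 𝒳), hmem⟩ - ((E₀ + lam : ℝ) : ℂ) • C (Ξ : 𝒳)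
      = C (H Ξ - (E₀ : ℂ) • (Ξ : 𝒳))
        + (adjoint (rep.B g) (Ξ : 𝒳) - rep.B g (Ξ : 𝒳))
        - ((2 * lam : ℝ) : ℂ) • rep.B h (Ξ : 𝒳) + R Ξ := by
    rw [hHval, hw, hAg, hBg, hCdef]
    simp only [ContinuousLinearMap.add_apply, ContinuousLinearMap.sub_apply,
      ContinuousLinearMap.smul_apply, map_sub, map_smul]
    push_cast
    module
  refine ⟨by rw [hiso, hΞnorm], hmem, ?_⟩
  have b1 : ‖C (H Ξ - (E₀ : ℂ) • (Ξ : 𝒳))‖ ≤ ε := by rw [hiso]; exact hΞ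
  have bsum := hBnorm g (Ξ : 𝒳)
  rw [hΞnorm] at bsum
  have b2 : ‖adjoint (rep.B g) (Ξ : 𝒳)‖ ≤ ‖g‖ := by
    nlinarith [norm_nonneg (adjoint (rep.B g) (Ξ : 𝒳)), norm_nonneg g,
      sq_nonneg (‖rep.B g (Ξ : 𝒳)‖)]
  have b3 : ‖rep.B g (Ξ : 𝒳)‖ ≤ ‖g‖ := by
    nlinarith [norm_nonneg (rep.B g (Ξ : 𝒳)), norm_nonneg g,
      sq_nonneg (‖adjoint (rep.B g) (Ξ : 𝒳)‖)]
  have b4 : ‖((2 * lam : ℝ) : ℂ) • rep.B h (Ξ : 𝒳)‖ = 2 * |lam| * ‖rep.B h (Ξ : 𝒳)‖ := by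
    rw [norm_smul, Complex.norm_real, Real.norm_eq_abs, abs_mul]
    norm_num [mul_assoc]
  calc ‖H ⟨C (Ξ : 𝒳), hmem⟩ - ((E₀ + lam : ℝ) : ℂ) • C (Ξ : 𝒳)‖
      = ‖C (H Ξ - (E₀ : ℂ) • (Ξ : 𝒳))
        + (adjoint (rep.B g) (Ξ : 𝒳) - rep.B g (Ξ : 𝒳))
        - ((2 * lam : ℝ) : ℂ) • rep.B h (Ξ : 𝒳) + R Ξ‖ := by rw [hvec]
    _ ≤ ‖C (H Ξ - (E₀ : ℂ) • (Ξ : 𝒳))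
        + (adjoint (rep.B g) (Ξ : 𝒳) - rep.B g (Ξ : 𝒳))
        - ((2 * lam : ℝ) : ℂ) • rep.B h (Ξ : 𝒳)‖ + ‖R Ξ‖ := norm_add_le _ _
    _ ≤ (‖C (H Ξ - (E₀ : ℂ) • (Ξ : 𝒳))
        + (adjoint (rep.B g) (Ξ : 𝒳) - rep.B g (Ξ : 𝒳))‖
        + ‖((2 * lam : ℝ) : ℂ) • rep.B h (Ξ : 𝒳)‖) + ‖R Ξ‖ := by
      gcongr; exact norm_sub_le _ _
    _ ≤ ((‖C (H Ξ - (E₀ : ℂ) • (Ξ : 𝒳))‖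
        + (‖adjoint (rep.B g) (Ξ : 𝒳)‖ + ‖rep.B g (Ξ : 𝒳)‖))
        + ‖((2 * lam : ℝ) : ℂ) • rep.B h (Ξ : 𝒳)‖) + ‖R Ξ‖ := by
      gcongr
      exact (norm_add_le _ _).trans (by gcongr; exact norm_sub_le _ _)
    _ ≤ 2 * ε + 2 * ‖k - (lam : ℂ) • h‖ + 2 * |lam| * ‖rep.B h (Ξ : 𝒳)‖ + ‖R Ξ‖ := by
      rw [b4, ← hg]
      linarith [b1, b2, b3, hε]
end

section
/- Let H be a densely defined self-adjoint operator on a complex Hilbert space 𝒳, let B be a cyclic CAR representation of a complex Hilbert space 𝒦 on 𝒳, let K₀ be a densely defined operator on 𝒦, and let E₀ be a real number such that for every ε ∈ (0,1] there exists a unit vector Ξ_ε ∈ D(H) with ‖(H − E₀)Ξ_ε‖ ≤ ε. Assume the weak commutator hypothesis: for every h ∈ D(K₀) there is a map R(h) : D(H) → 𝒳 such that for all Φ, Ψ ∈ D(H): ⟨HΦ, (B(h) + B(h)*)Ψ⟩ − ⟨(B(h) + B(h)*)Φ, HΨ⟩ = ⟨Φ, (B(K₀h)* − B(K₀h))Ψ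 + R(h)Ψ⟩, and moreover for every sequence (h_n) in D(K₀) with ‖h_n‖ = 1 and h_n → 0 weakly, R(h_n)Ψ → 0 in norm for every Ψ ∈ D(H). Let λ be a nonzero real number admitting a singular Weyl sequence for K₀, i.e. a sequence (h_n) in D(K₀) with ‖h_n‖ = 1, h_n → 0 weakly, and ‖K₀h_n − λh_n‖ → 0. Then there exists a singular Weyl sequence for H at E₀ + λ: a sequence of unit vectors Ψ_j ∈ D(H) with Ψ_j → 0 weakly and ‖HΨ_j − (E₀ + λ)Ψ_j‖ → 0. -/
/-- A CAR representation is *cyclic* if the linear span of the vectors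
`B(f₁)* ⋯ B(f_l)* v`, with `l ≥ 0`, `f_i ∈ 𝒦` and `v` in the vacuum subspace
`{v | B(f)v = 0 for all f}`, is dense in `𝒳`. -/
def CARRep.IsCyclic {𝒦 𝒳 : Type*} [NormedAddCommGroup 𝒦] [InnerProductSpace ℂ 𝒦]
    [NormedAddCommGroup 𝒳] [InnerProductSpace ℂ 𝒳] [CompleteSpace 𝒳]
    (rep : CARRep 𝒦 𝒳) : Prop :=
  Dense (Submodule.span ℂ
    {x : 𝒳 | ∃ (l : ℕ) (f : Fin l → 𝒦) (v : 𝒳), (∀ g : 𝒦, rep.B g v = 0) ∧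
      x = (List.ofFn fun i : Fin l =>
        ContinuousLinearMap.adjoint (rep.B (f i))).prod v} : Set 𝒳)


section AuxEssSpec
open ContinuousLinearMap Filter

variable {𝒦 𝒳 : Type*} [NormedAddCommGroup 𝒦] [InnerProductSpace ℂ 𝒦]
    [NormedAddCommGroup 𝒳] [InnerProductSpace ℂ 𝒳] [CompleteSpace 𝒳]
    (rep : CARRep 𝒦 𝒳)

lemma CARRep.norm_sq_add (f : 𝒦) (x : 𝒳) :
    (‖rep.B f x‖^2 : ℝ) + ‖adjoint (rep.B f) x‖^2 = ‖f‖^2 * ‖x‖^2 := by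
  have h := congrArg (fun A : 𝒳 →L[ℂ] 𝒳 => (inner ℂ x (A x) : ℂ)) (rep.car_mixed f f)
  simp only [add_apply, mul_apply_eq_comp, smul_apply, one_apply_eq_self, inner_add_right, inner_smul_right] at h
  have h1 : (inner ℂ x ((rep.B f) ((adjoint (rep.B f)) x)) : ℂ)
      = inner ℂ (adjoint (rep.B f) x) (adjoint (rep.B f) x) :=
    (adjoint_inner_left (rep.B f) (adjoint (rep.B f) x) x).symm
  have h2 : (inner ℂ x ((adjoint (rep.B f)) ((rep.B f) x)) : ℂ)
      = inner ℂ (rep.B f x) (rep.B f x) := adjoint_inner_right (rep.B f) _ _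
  rw [h1, h2,
    show (inner ℂ (adjoint (rep.B f) x) (adjoint (rep.B f) x) : ℂ) = (‖adjoint (rep.B f) x‖:ℂ)^2
      from inner_self_eq_norm_sq_to_K _,
    show (inner ℂ (rep.B f x) (rep.B f x) : ℂ) = (‖rep.B f x‖:ℂ)^2
      from inner_self_eq_norm_sq_to_K _,
    show (inner ℂ f f : ℂ) = (‖f‖:ℂ)^2 from inner_self_eq_norm_sq_to_K _,
    show (inner ℂ x x : ℂ) = (‖x‖:ℂ)^2 from inner_self_eq_norm_sq_to_K x] at h
  have h4 : (‖adjoint (rep.B f) x‖^2 + ‖rep.B f x‖^2 : ℝ) = ‖f‖^2 * ‖x‖^2 := by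
    apply Complex.ofReal_injective
    push_cast
    linear_combination h
  linarith

lemma CARRep.norm_apply_le (f : 𝒦) (x : 𝒳) : ‖rep.B f x‖ ≤ ‖f‖ * ‖x‖ := by
  have h := rep.norm_sq_add f x
  nlinarith [sq_nonneg ‖adjoint (rep.B f) x‖, norm_nonneg (rep.B f x),
    norm_nonneg f, norm_nonneg x, mul_nonneg (norm_nonneg f) (norm_nonneg x)]

lemma CARRep.norm_adj_apply_le (f : 𝒦) (x : 𝒳) : ‖adjoint (rep.B f) x‖ ≤ ‖f‖ * ‖x‖ := by
  have h := rep.norm_sq_add f x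
  nlinarith [sq_nonneg ‖rep.B f x‖, norm_nonneg (adjoint (rep.B f) x),
    norm_nonneg f, norm_nonneg x, mul_nonneg (norm_nonneg f) (norm_nonneg x)]

lemma CARRep.comm_apply (f g : 𝒦) (y : 𝒳) :
    rep.B f (adjoint (rep.B g) y) = (inner ℂ f g : ℂ) • y - adjoint (rep.B g) (rep.B f y) := by
  have h := congrArg (fun A : 𝒳 →L[ℂ] 𝒳 => A y) (rep.car_mixed f g)
  simp only [add_apply, mul_apply_eq_comp, smul_apply, one_apply_eq_self] at h
  linear_combination (norm := abel) h

/-- Strong convergence `B(h_n) x → 0` for weakly null normalized sequences. -/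
lemma CARRep.strong_null
    (hcyc : Dense (Submodule.span ℂ
      {x : 𝒳 | ∃ (l : ℕ) (f : Fin l → 𝒦) (v : 𝒳), (∀ g : 𝒦, rep.B g v = 0) ∧
        x = (List.ofFn fun i : Fin l =>
          ContinuousLinearMap.adjoint (rep.B (f i))).prod v} : Set 𝒳))
    (h : ℕ → 𝒦) (hnorm : ∀ n, ‖h n‖ = 1)
    (hweak : ∀ g : 𝒦, Tendsto (fun n => (inner ℂ g (h n) : ℂ)) atTop (nhds 0)) (x : 𝒳) :
    Tendsto (fun n => rep.B (h n) x) atTop (nhds 0) := by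
  -- first on generators
  have key : ∀ l (f : Fin l → 𝒦) (v : 𝒳), (∀ g : 𝒦, rep.B g v = 0) →
      Tendsto (fun n => rep.B (h n)
        ((List.ofFn fun i : Fin l => adjoint (rep.B (f i))).prod v)) atTop (nhds 0) := by
    intro l
    induction l with
    | zero =>
      intro f v hv
      simp only [List.ofFn_zero, List.prod_nil, one_apply_eq_self, hv]
      exact tendsto_const_nhds
    | succ m ih =>
      intro f v hv
      have hrw : ∀ n, rep.B (h n) ((List.ofFn fun i : Fin (m+1) => adjoint (rep.B (f i))).prod v)
          = (inner ℂ (h n) (f 0) : ℂ) •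
              ((List.ofFn fun i : Fin m => adjoint (rep.B (f i.succ))).prod v)
            - adjoint (rep.B (f 0)) (rep.B (h n)
              ((List.ofFn fun i : Fin m => adjoint (rep.B (f i.succ))).prod v)) := by
        intro n
        rw [List.ofFn_succ, List.prod_cons, mul_apply_eq_comp]
        exact rep.comm_apply _ _ _
      simp only [hrw]
      have h1 : Tendsto (fun n => (inner ℂ (h n) (f 0) : ℂ)) atTop (nhds 0) := by
        have := (hweak (f 0)).norm
        rw [show ‖(0:ℂ)‖ = 0 by simp] at this
        rw [tendsto_zero_iff_norm_tendsto_zero]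
        refine this.congr fun n => ?_
        rw [← inner_conj_symm]; exact RCLike.norm_conj _
      have h2 := ih (fun i => f i.succ) v hv
      have t1 : Tendsto (fun n => (inner ℂ (h n) (f 0) : ℂ) •
          ((List.ofFn fun i : Fin m => adjoint (rep.B (f i.succ))).prod v)) atTop (nhds 0) := by
        simpa using h1.smul_const ((List.ofFn fun i : Fin m => adjoint (rep.B (f i.succ))).prod v)
      have t2 : Tendsto (fun n => adjoint (rep.B (f 0)) (rep.B (h n)
          ((List.ofFn fun i : Fin m => adjoint (rep.B (f i.succ))).prod v))) atTop (nhds 0) := by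
        have hc := (adjoint (rep.B (f 0))).continuous.tendsto 0
        rw [map_zero] at hc
        exact hc.comp h2
      simpa using t1.sub t2
  -- extend to the span
  have span_case : ∀ y ∈ Submodule.span ℂ
      {x : 𝒳 | ∃ (l : ℕ) (f : Fin l → 𝒦) (v : 𝒳), (∀ g : 𝒦, rep.B g v = 0) ∧
        x = (List.ofFn fun i : Fin l => adjoint (rep.B (f i))).prod v},
      Tendsto (fun n => rep.B (h n) y) atTop (nhds 0) := by
    intro y hy
    induction hy using Submodule.span_induction with
    | mem z hz =>
      obtain ⟨l, f, v, hv, rfl⟩ := hz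
      exact key l f v hv
    | zero => simp only [map_zero]; exact tendsto_const_nhds
    | add a b _ _ ha hb => simpa [map_add] using ha.add hb
    | smul c a _ ha =>
      have := ha.const_smul c
      simpa [map_smul] using this
  -- extend to closure via uniform bound
  rw [NormedAddCommGroup.tendsto_nhds_zero]
  intro ε hε
  have hx : x ∈ closure (Submodule.span ℂ
      {x : 𝒳 | ∃ (l : ℕ) (f : Fin l → 𝒦) (v : 𝒳), (∀ g : 𝒦, rep.B g v = 0) ∧
        x = (List.ofFn fun i : Fin l => adjoint (rep.B (f i))).prod v} : Set 𝒳) := by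
    rw [hcyc.closure_eq]; trivial
  obtain ⟨y, hy, hxy⟩ := Metric.mem_closure_iff.mp hx (ε/2) (by linarith)
  have hyt := span_case y hy
  rw [NormedAddCommGroup.tendsto_nhds_zero] at hyt
  filter_upwards [hyt (ε/2) (by linarith)] with n hn
  have hb : ‖rep.B (h n) x - rep.B (h n) y‖ ≤ ‖x - y‖ := by
    rw [← map_sub]
    have := rep.norm_apply_le (h n) (x - y)
    rwa [hnorm n, one_mul] at this
  have : ‖rep.B (h n) x‖ ≤ ‖x - y‖ + ‖rep.B (h n) y‖ := by
    calc ‖rep.B (h n) x‖ = ‖(rep.B (h n) x - rep.B (h n) y) + rep.B (h n) y‖ := by rw [sub_add_cancel]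
    _ ≤ _ := (norm_add_le _ _).trans (by gcongr)
  have hd : ‖x - y‖ < ε/2 := by rwa [← dist_eq_norm]
  calc ‖rep.B (h n) x‖ ≤ ‖x - y‖ + ‖rep.B (h n) y‖ := this
  _ < ε/2 + ε/2 := by gcongr
  _ = ε := by ring

lemma CARRep.B_sq_zero (f : 𝒦) : rep.B f * rep.B f = 0 := by
  have h : (2:ℂ) • (rep.B f * rep.B f) = 0 := by rw [two_smul]; exact rep.car_ann f f
  exact (smul_eq_zero.mp h).resolve_left (by norm_num)

lemma CARRep.adjoint_selfadj (f : 𝒦) :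
    adjoint (rep.B f + adjoint (rep.B f)) = rep.B f + adjoint (rep.B f) := by
  rw [LinearIsometryEquiv.map_add, adjoint_adjoint, add_comm]

lemma CARRep.C_mul_C (f : 𝒦) (hf : ‖f‖ = 1) :
    (rep.B f + adjoint (rep.B f)) * (rep.B f + adjoint (rep.B f)) = 1 := by
  have hadj : adjoint (rep.B f) * adjoint (rep.B f) = 0 := by
    have : adjoint (rep.B f * rep.B f) = adjoint (rep.B f) * adjoint (rep.B f) :=
      adjoint_comp (rep.B f) (rep.B f)
    rw [← this, rep.B_sq_zero f, map_zero]
  have := rep.car_mixed f f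
  rw [add_mul, mul_add, mul_add, rep.B_sq_zero f, hadj]
  rw [show (inner ℂ f f : ℂ) = (‖f‖:ℂ)^2 from inner_self_eq_norm_sq_to_K f] at this
  rw [hf] at this
  simp only [Complex.ofReal_one, one_pow, one_smul] at this
  calc 0 + rep.B f * adjoint (rep.B f) + (adjoint (rep.B f) * rep.B f + 0)
      = rep.B f * adjoint (rep.B f) + adjoint (rep.B f) * rep.B f := by abel
  _ = 1 := this

lemma CARRep.norm_C_apply (f : 𝒦) (hf : ‖f‖ = 1) (x : 𝒳) :
    ‖(rep.B f + adjoint (rep.B f)) x‖ = ‖x‖ := by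
  set C := rep.B f + adjoint (rep.B f) with hC
  have hCadj : adjoint C = C := by rw [hC, LinearIsometryEquiv.map_add, adjoint_adjoint, add_comm]
  have h1 : (inner ℂ (C x) (C x) : ℂ) = inner ℂ x (C (C x)) := by
    have := adjoint_inner_left C (C x) x
    rwa [hCadj] at this
  have h2 : C (C x) = x := by
    have := congrArg (fun A : 𝒳 →L[ℂ] 𝒳 => A x) (rep.C_mul_C f hf)
    simp only [mul_apply_eq_comp, one_apply_eq_self] at this
    rw [hC]
    exact this
  rw [h2, show (inner ℂ (C x) (C x) : ℂ) = (‖C x‖:ℂ)^2 from inner_self_eq_norm_sq_to_K _,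
    show (inner ℂ x x : ℂ) = (‖x‖:ℂ)^2 from inner_self_eq_norm_sq_to_K _] at h1
  have h3 : ‖C x‖^2 = ‖x‖^2 := by exact_mod_cast h1
  nlinarith [norm_nonneg (C x), norm_nonneg x]

/-- Domain membership via self-adjointness. -/
lemma selfadjoint_mem_domain {H : 𝒳 →ₗ.[ℂ] 𝒳} (hsa : IsSelfAdjoint H) (ξ w : 𝒳)
    (hw : ∀ x : H.domain, (inner ℂ w (x : 𝒳) : ℂ) = inner ℂ ξ (H x)) :
    ∃ Ψ : H.domain, (Ψ : 𝒳) = ξ ∧ H Ψ = w := by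
  have hd : Dense (H.domain : Set 𝒳) := hsa.dense_domain
  have heq : LinearPMap.adjoint H = H := LinearPMap.isSelfAdjoint_def.mp hsa
  have hmem : ξ ∈ (LinearPMap.adjoint H).domain :=
    LinearPMap.mem_adjoint_domain_of_exists (T := H) ξ ⟨w, hw⟩
  have happ : LinearPMap.adjoint H ⟨ξ, hmem⟩ = w :=
    LinearPMap.adjoint_apply_eq hd ⟨ξ, hmem⟩ (fun x => hw x)
  have hle : LinearPMap.adjoint H ≤ H := le_of_eq heq
  obtain ⟨y, hy1, hy2⟩ := LinearPMap.exists_of_le hle ⟨ξ, hmem⟩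
  exact ⟨y, hy1.symm, by rw [← hy2, happ]⟩


end AuxEssSpec

open ContinuousLinearMap Filter in
open ContinuousLinearMap in
/-- **main theorem, Theorem 1.1.** Let `H` be a densely defined self-adjoint
operator on `𝒳`, `B` a cyclic CAR representation of `𝒦` on `𝒳`, `K₀` a densely defined
operator on `𝒦`, and `E₀ ∈ ℝ` such that for every `ε ∈ (0,1]` there is a unit vector
`Ξ_ε ∈ D(H)` with `‖(H − E₀)Ξ_ε‖ ≤ ε`. Assume the weak-commutator hypothesis: for every
`h ∈ D(K₀)` there is `R h : D(H) → 𝒳` with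
`⟨HΦ, (B(h)+B(h)*)Ψ⟩ − ⟨(B(h)+B(h)*)Φ, HΨ⟩ = ⟨Φ, (B(K₀h)* − B(K₀h))Ψ + (R h)Ψ⟩`,
and `(R h_n)Ψ → 0` in norm along every weakly null normalized sequence `(h_n)` in `D(K₀)`.
If `λ ≠ 0` admits a singular Weyl sequence for `K₀`, then `E₀ + λ` admits a singular Weyl
sequence for `H`: unit vectors `Ψ_j ∈ D(H)`, weakly null, with `‖HΨ_j − (E₀+λ)Ψ_j‖ → 0`. -/
theorem essential_spectrum_main {𝒦 𝒳 : Type*}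
    [NormedAddCommGroup 𝒦] [InnerProductSpace ℂ 𝒦] [CompleteSpace 𝒦]
    [NormedAddCommGroup 𝒳] [InnerProductSpace ℂ 𝒳] [CompleteSpace 𝒳]
    (H : 𝒳 →ₗ.[ℂ] 𝒳) (hHdense : Dense (H.domain : Set 𝒳)) (hHsa : IsSelfAdjoint H)
    (rep : CARRep 𝒦 𝒳) (hcyc : rep.IsCyclic)
    (K₀ : 𝒦 →ₗ.[ℂ] 𝒦) (hKdense : Dense (K₀.domain : Set 𝒦))
    (E₀ : ℝ)
    (hE₀ : ∀ ε : ℝ, 0 < ε → ε ≤ 1 → ∃ Ξ : H.domain, ‖(Ξ : 𝒳)‖ = 1 ∧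
      ‖H Ξ - (E₀ : ℂ) • (Ξ : 𝒳)‖ ≤ ε)
    (R : K₀.domain → H.domain → 𝒳)
    (hR : ∀ (h : K₀.domain) (Φ Ψ : H.domain),
      (inner ℂ (H Φ) ((rep.B (h : 𝒦) + adjoint (rep.B (h : 𝒦))) (Ψ : 𝒳)) : ℂ)
          - (inner ℂ ((rep.B (h : 𝒦) + adjoint (rep.B (h : 𝒦))) (Φ : 𝒳)) (H Ψ) : ℂ)
        = (inner ℂ (Φ : 𝒳)
            ((adjoint (rep.B (K₀ h)) - rep.B (K₀ h)) (Ψ : 𝒳) + R h Ψ) : ℂ))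
    (hRnull : ∀ h : ℕ → K₀.domain, (∀ n, ‖(h n : 𝒦)‖ = 1) →
      (∀ g : 𝒦, Filter.Tendsto (fun n => (inner ℂ g ((h n : 𝒦)) : ℂ)) Filter.atTop (nhds 0)) →
      ∀ Ψ : H.domain, Filter.Tendsto (fun n => ‖R (h n) Ψ‖) Filter.atTop (nhds 0))
    (lam : ℝ) (hlam : lam ≠ 0)
    (h : ℕ → K₀.domain) (hhnorm : ∀ n, ‖(h n : 𝒦)‖ = 1)
    (hhweak : ∀ g : 𝒦,
      Filter.Tendsto (fun n => (inner ℂ g ((h n : 𝒦)) : ℂ)) Filter.atTop (nhds 0))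
    (hhweyl : Filter.Tendsto (fun n => ‖K₀ (h n) - (lam : ℂ) • ((h n : 𝒦))‖)
      Filter.atTop (nhds 0)) :
    ∃ Ψ : ℕ → H.domain, (∀ j, ‖(Ψ j : 𝒳)‖ = 1) ∧
      (∀ Φ : 𝒳, Filter.Tendsto (fun j => (inner ℂ Φ ((Ψ j : 𝒳)) : ℂ)) Filter.atTop (nhds 0)) ∧
      Filter.Tendsto (fun j => ‖H (Ψ j) - ((E₀ + lam : ℝ) : ℂ) • ((Ψ j : 𝒳))‖)
        Filter.atTop (nhds 0) := by
  classical
  unfold CARRep.IsCyclic at hcyc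
  set ε : ℕ → ℝ := fun j => 1 / ((j : ℝ) + 1) with hε
  have hεpos : ∀ j, 0 < ε j := fun j => by positivity
  have hεle : ∀ j, ε j ≤ 1 := fun j => by
    rw [hε]; rw [div_le_one (by positivity)]; simp
  have hεtendsto : Filter.Tendsto ε atTop (nhds 0) :=
    tendsto_one_div_add_atTop_nhds_zero_nat
  -- the per-j construction
  have claim : ∀ j : ℕ, ∃ (Ψ : H.domain) (m : ℕ) (Ξv : 𝒳), j ≤ m ∧ ‖Ξv‖ = 1 ∧
      ‖rep.B ((h m : 𝒦)) Ξv‖ ≤ ε j ∧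
      (Ψ : 𝒳) = (rep.B ((h m : 𝒦)) + adjoint (rep.B ((h m : 𝒦)))) Ξv ∧
      ‖(Ψ : 𝒳)‖ = 1 ∧
      ‖H Ψ - ((E₀ + lam : ℝ) : ℂ) • (Ψ : 𝒳)‖ ≤ (5 + 2*|lam|) * ε j := by
    intro j
    obtain ⟨Ξ, hΞnorm, hΞbound⟩ := hE₀ (ε j) (hεpos j) (hεle j)
    -- pick m
    have t1 := rep.strong_null hcyc (fun n => ((h n : 𝒦))) hhnorm hhweak (Ξ : 𝒳)
    have t1' : Filter.Tendsto (fun n => ‖rep.B ((h n : 𝒦)) (Ξ : 𝒳)‖) atTop (nhds 0) :=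
      tendsto_zero_iff_norm_tendsto_zero.mp t1
    have t3 := hRnull h hhnorm hhweak Ξ
    have hev : ∀ᶠ n in atTop, ‖rep.B ((h n : 𝒦)) (Ξ : 𝒳)‖ ≤ ε j ∧
        ‖K₀ (h n) - (lam : ℂ) • ((h n : 𝒦))‖ ≤ ε j ∧ ‖R (h n) Ξ‖ ≤ ε j := by
      filter_upwards [t1'.eventually_le_const (hεpos j) |>.and
        ((hhweyl.eventually_le_const (hεpos j)).and (t3.eventually_le_const (hεpos j)))]
        with n hn
      exact ⟨hn.1, hn.2.1, hn.2.2⟩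
    obtain ⟨N, hN⟩ := Filter.eventually_atTop.mp hev
    set m := max N j with hm
    obtain ⟨hb1, hb2, hb3⟩ := hN m (le_max_left _ _)
    have hjm : j ≤ m := le_max_right _ _
    -- notation
    set f : 𝒦 := (h m : 𝒦) with hf
    set C : 𝒳 →L[ℂ] 𝒳 := rep.B f + adjoint (rep.B f) with hCdef
    have hCadj : adjoint C = C := rep.adjoint_selfadj f
    set k : 𝒦 := K₀ (h m) - (lam : ℂ) • f with hk
    have hKk : K₀ (h m) = k + (lam : ℂ) • f := (sub_add_cancel _ _).symm
    have hBK : rep.B (K₀ (h m)) = rep.B k + (lam : ℂ) • rep.B f := by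
      rw [hKk, rep.map_add, rep.map_smul, Complex.conj_ofReal]
    have hBKadj : adjoint (rep.B (K₀ (h m)))
        = adjoint (rep.B k) + (lam : ℂ) • adjoint (rep.B f) := by
      rw [hBK, LinearIsometryEquiv.map_add, LinearIsometryEquiv.map_smulₛₗ,
        Complex.conj_ofReal]
    set D : 𝒳 →L[ℂ] 𝒳 := adjoint (rep.B (K₀ (h m))) - rep.B (K₀ (h m)) with hDdef
    set w : 𝒳 := C (H Ξ) + (D (Ξ : 𝒳) + R (h m) Ξ) with hw
    -- C Ξ is in the domain of H
    have hwx : ∀ x : H.domain, (inner ℂ w (x : 𝒳) : ℂ) = inner ℂ (C (Ξ : 𝒳)) (H x) := by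
      intro x
      have hcomm := hR (h m) x Ξ
      have hgoal : (inner ℂ (C (Ξ : 𝒳)) (H x) : ℂ)
          = inner ℂ (H Ξ) (C (x : 𝒳)) + inner ℂ (D (Ξ : 𝒳) + R (h m) Ξ) (x : 𝒳) := by
        have hc := congrArg (starRingEnd ℂ) hcomm
        simp only [map_sub, map_add, inner_conj_symm] at hc
        linear_combination hc
      have hCH : (inner ℂ (C (H Ξ)) (x : 𝒳) : ℂ) = inner ℂ (H Ξ) (C (x : 𝒳)) := by
        have := adjoint_inner_left C (x : 𝒳) (H Ξ)
        rwa [hCadj] at this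
      calc (inner ℂ w (x : 𝒳) : ℂ)
          = inner ℂ (C (H Ξ)) (x : 𝒳) + inner ℂ (D (Ξ : 𝒳) + R (h m) Ξ) (x : 𝒳) := by
            rw [hw, inner_add_left]
        _ = inner ℂ (H Ξ) (C (x : 𝒳)) + inner ℂ (D (Ξ : 𝒳) + R (h m) Ξ) (x : 𝒳) := by rw [hCH]
        _ = inner ℂ (C (Ξ : 𝒳)) (H x) := hgoal.symm
    obtain ⟨Ψ, hΨcoe, hΨval⟩ := selfadjoint_mem_domain hHsa (C (Ξ : 𝒳)) w hwx
    refine ⟨Ψ, m, (Ξ : 𝒳), hjm, hΞnorm, hb1, by rw [hΨcoe], ?_, ?_⟩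
    · rw [hΨcoe, rep.norm_C_apply f (hhnorm m) (Ξ : 𝒳), hΞnorm]
    · -- the error identity
      have hid : H Ψ - ((E₀ + lam : ℝ) : ℂ) • (Ψ : 𝒳)
          = C (H Ξ - (E₀ : ℂ) • (Ξ : 𝒳))
            + (adjoint (rep.B k) (Ξ : 𝒳) - rep.B k (Ξ : 𝒳)
                - ((2 * lam : ℝ) : ℂ) • rep.B f (Ξ : 𝒳))
            + R (h m) Ξ := by
        rw [hΨval, hΨcoe, hw, hDdef, hBKadj, hBK, hCdef]
        simp only [map_sub, map_smul, add_apply, sub_apply, smul_apply]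
        push_cast
        module
      rw [hid]
      have n1 : ‖C (H Ξ - (E₀ : ℂ) • (Ξ : 𝒳))‖ ≤ 2 * ε j := by
        rw [hCdef, add_apply]
        refine (norm_add_le _ _).trans ?_
        have a1 := rep.norm_apply_le f (H Ξ - (E₀ : ℂ) • (Ξ : 𝒳))
        have a2 := rep.norm_adj_apply_le f (H Ξ - (E₀ : ℂ) • (Ξ : 𝒳))
        rw [hhnorm m, one_mul] at a1 a2
        linarith
      have n2 : ‖adjoint (rep.B k) (Ξ : 𝒳)‖ ≤ ε j := by
        have := rep.norm_adj_apply_le k (Ξ : 𝒳)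
        rw [hΞnorm, mul_one] at this
        exact this.trans hb2
      have n3 : ‖rep.B k (Ξ : 𝒳)‖ ≤ ε j := by
        have := rep.norm_apply_le k (Ξ : 𝒳)
        rw [hΞnorm, mul_one] at this
        exact this.trans hb2
      have n4 : ‖((2 * lam : ℝ) : ℂ) • rep.B f (Ξ : 𝒳)‖ ≤ 2 * |lam| * ε j := by
        rw [norm_smul, Complex.norm_real, Real.norm_eq_abs, abs_mul, abs_two]
        exact mul_le_mul_of_nonneg_left hb1 (by positivity)
      calc ‖C (H Ξ - (E₀ : ℂ) • (Ξ : 𝒳))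
            + (adjoint (rep.B k) (Ξ : 𝒳) - rep.B k (Ξ : 𝒳)
                - ((2 * lam : ℝ) : ℂ) • rep.B f (Ξ : 𝒳)) + R (h m) Ξ‖
          ≤ ‖C (H Ξ - (E₀ : ℂ) • (Ξ : 𝒳))‖
            + (‖adjoint (rep.B k) (Ξ : 𝒳)‖ + ‖rep.B k (Ξ : 𝒳)‖
                + ‖((2 * lam : ℝ) : ℂ) • rep.B f (Ξ : 𝒳)‖) + ‖R (h m) Ξ‖ := by
            refine (norm_add_le _ _).trans (add_le_add
              ((norm_add_le _ _).trans (add_le_add le_rfl ?_)) le_rfl)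
            exact (norm_sub_le _ _).trans (add_le_add (norm_sub_le _ _) le_rfl)
        _ ≤ 2 * ε j + (ε j + ε j + 2 * |lam| * ε j) + ε j :=
            add_le_add (add_le_add n1 (add_le_add (add_le_add n2 n3) n4)) hb3
        _ = (5 + 2*|lam|) * ε j := by ring
  -- choose the data
  choose Ψ m Ξv hjm hΞnorm hBΞ hcoe hnorm herr using claim
  have hmtop : Filter.Tendsto m atTop atTop := tendsto_atTop_mono hjm tendsto_id
  refine ⟨Ψ, hnorm, ?_, ?_⟩
  · intro Φ
    have hBΦ : Filter.Tendsto (fun j => ‖rep.B ((h (m j) : 𝒦)) Φ‖) atTop (nhds 0) := by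
      have := (rep.strong_null hcyc (fun n => ((h n : 𝒦))) hhnorm hhweak Φ).comp hmtop
      exact tendsto_zero_iff_norm_tendsto_zero.mp this
    have hbound : ∀ j, ‖(inner ℂ Φ ((Ψ j : 𝒳)) : ℂ)‖
        ≤ ‖Φ‖ * ε j + ‖rep.B ((h (m j) : 𝒦)) Φ‖ := by
      intro j
      rw [hcoe j, add_apply, inner_add_right]
      refine (norm_add_le _ _).trans (add_le_add ?_ ?_)
      · exact (norm_inner_le_norm _ _).trans
          (mul_le_mul_of_nonneg_left (hBΞ j) (norm_nonneg Φ))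
      · rw [adjoint_inner_right]
        exact (norm_inner_le_norm _ _).trans (by rw [hΞnorm j, mul_one])
    rw [tendsto_zero_iff_norm_tendsto_zero]
    have hlim : Filter.Tendsto (fun j => ‖Φ‖ * ε j + ‖rep.B ((h (m j) : 𝒦)) Φ‖)
        atTop (nhds 0) := by
      have := (hεtendsto.const_mul ‖Φ‖).add hBΦ
      simpa only [mul_zero, add_zero] using this
    exact squeeze_zero (fun j => norm_nonneg _) hbound hlim
  · have hlim : Filter.Tendsto (fun j => (5 + 2*|lam|) * ε j) atTop (nhds 0) := by
      have := hεtendsto.const_mul (5 + 2*|lam|)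
      simpa only [mul_zero] using this
    exact squeeze_zero (fun j => norm_nonneg _) herr hlim
end
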